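/- Let K be a compact metric space and U : C(K) → C(K) a positive linear operator with U1 = 1 (a Markov–Feller operator) such that for every g ∈ C(K) and every x ∈ K, the Cesàro averages (1/n) ∑_{k=0}^{n-1} U^k g(x) converge to μ(g) for a fixed Borel probability measure μ. Then for every g ∈ C(K), the Cesàro averages (1/n) ∑_{k=0}^{n-1} U^k g converge to the constant function μ(g) uniformly on K. -/
import Mathlib


open MeasureTheory Filter Finset

section KYAux

variable {K : Type} [MetricSpace K] [CompactSpace K]
    (U : C(K, ℝ) →L[ℝ] C(K, ℝ))

lemma ky_pow_one (hone : U 1 = 1) (k : ℕ) : (U ^ k) (1 : C(K, ℝ)) = 1 := by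
  induction k with
  | zero => simp
  | succ n ih => rw [pow_succ, ContinuousLinearMap.mul_apply, hone, ih]

lemma ky_pow_pos (hpos : ∀ f : C(K, ℝ), (∀ x, 0 ≤ f x) → ∀ x, 0 ≤ (U f) x) (k : ℕ) :
    ∀ (f : C(K, ℝ)), (∀ x, 0 ≤ f x) → ∀ x, 0 ≤ ((U ^ k) f) x := by
  induction k with
  | zero => intro f hf x; simpa using hf x
  | succ n ih =>
    intro f hf x
    rw [pow_succ, ContinuousLinearMap.mul_apply]
    exact ih (U f) (hpos f hf) x

lemma ky_pow_le (hpos : ∀ f : C(K, ℝ), (∀ x, 0 ≤ f x) → ∀ x, 0 ≤ (U f) x)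
    (hone : U 1 = 1) (k : ℕ) (f : C(K, ℝ)) (B : ℝ) (hf : ∀ x, f x ≤ B) :
    ∀ x, ((U ^ k) f) x ≤ B := by
  intro x
  have h0 : ∀ y, 0 ≤ (B • (1 : C(K, ℝ)) - f) y := by
    intro y
    simp only [ContinuousMap.sub_apply, ContinuousMap.smul_apply, ContinuousMap.one_apply,
      smul_eq_mul, mul_one]
    linarith [hf y]
  have := ky_pow_pos U hpos k _ h0 x
  rw [map_sub, _root_.map_smul, ky_pow_one U hone] at this
  simp only [ContinuousMap.sub_apply, ContinuousMap.smul_apply, ContinuousMap.one_apply,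
    smul_eq_mul, mul_one] at this
  linarith

/-- Key quantitative lemma: if from every point some Cesàro block of length `m ∈ [1, M]`
has sum `≤ m ε`, then all partial sums are `≤ n ε + M B`. -/
lemma ky_key (hpos : ∀ f : C(K, ℝ), (∀ x, 0 ≤ f x) → ∀ x, 0 ≤ (U f) x)
    (hone : U 1 = 1) (h : C(K, ℝ)) (ε B : ℝ) (hB0 : 0 ≤ B) (hBle : ∀ x, h x ≤ B) (hε : 0 ≤ ε)
    (M : ℕ)
    (hcov : ∀ y, ∃ m, 1 ≤ m ∧ m ≤ M ∧ ∑ k ∈ Finset.range m, ((U ^ k) h) y ≤ m * ε) :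
    ∀ n y, ∑ k ∈ Finset.range n, ((U ^ k) h) y ≤ n * ε + M * B := by
  intro n
  induction n using Nat.strong_induction_on with
  | _ n IH =>
  intro y
  obtain ⟨m, hm1, hmM, hsum⟩ := hcov y
  by_cases hnm : n ≤ m
  · have hterm : ∀ k ∈ Finset.range n, ((U ^ k) h) y ≤ B := fun k _ =>
      ky_pow_le U hpos hone k h B hBle y
    have hnM : (n : ℝ) ≤ M := by exact_mod_cast hnm.trans hmM
    have hne : (0:ℝ) ≤ n * ε := by positivity
    calc ∑ k ∈ Finset.range n, ((U ^ k) h) y ≤ ∑ _k ∈ Finset.range n, B :=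
          Finset.sum_le_sum hterm
      _ = n * B := by simp [mul_comm]
      _ ≤ M * B := mul_le_mul_of_nonneg_right hnM hB0
      _ ≤ n * ε + M * B := by linarith
  · push_neg at hnm
    set t := n - m with ht
    have hn : n = m + t := by omega
    have htn : t < n := by omega
    have hsplit : ∑ k ∈ Finset.range n, ((U ^ k) h) y
        = ∑ k ∈ Finset.range m, ((U ^ k) h) y + ∑ i ∈ Finset.range t, ((U ^ (m + i)) h) y := by
      rw [hn, ← Finset.sum_range_add_sum_Ico _ (Nat.le_add_right m t),
        Finset.sum_Ico_eq_sum_range]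
      simp
    have htail : ∑ i ∈ Finset.range t, ((U ^ (m + i)) h) y
        = ((U ^ m) (∑ i ∈ Finset.range t, (U ^ i) h)) y := by
      rw [map_sum, ContinuousMap.coe_sum, Finset.sum_apply]
      congr 1
      ext i
      rw [pow_add, ContinuousLinearMap.mul_apply]
    have hq : ∀ x, (∑ i ∈ Finset.range t, (U ^ i) h) x ≤ t * ε + M * B := by
      intro x
      rw [ContinuousMap.coe_sum, Finset.sum_apply]
      exact IH t htn x
    have htailled : ((U ^ m) (∑ i ∈ Finset.range t, (U ^ i) h)) y ≤ t * ε + M * B :=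
      ky_pow_le U hpos hone m _ _ hq y
    rw [hsplit, htail]
    have hcast : (n : ℝ) = (m : ℝ) + t := by exact_mod_cast hn
    rw [hcast]
    linarith

end KYAux

/-- Kakutani–Yosida mean ergodic lemma: for a Markov–Feller operator `U` on `C(K)`
(`K` compact metric), if the Cesàro averages `(1/n) ∑_{k<n} U^k g (x)` converge pointwise
to `μ(g)` for every `g` and `x`, then for every `g` they converge uniformly on `K`
to the constant `μ(g)`. -/
theorem kakutani_yosida_uniform {K : Type} [MetricSpace K] [CompactSpace K]
    [MeasurableSpace K] [BorelSpace K]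
    (U : C(K, ℝ) →L[ℝ] C(K, ℝ))
    (hpos : ∀ f : C(K, ℝ), (∀ x, 0 ≤ f x) → ∀ x, 0 ≤ (U f) x)
    (hone : U 1 = 1)
    (μ : Measure K) [IsProbabilityMeasure μ]
    (hptw : ∀ (g : C(K, ℝ)) (x : K),
      Tendsto (fun n : ℕ => (n : ℝ)⁻¹ * ∑ k ∈ Finset.range n, ((U ^ k) g) x)
        atTop (nhds (∫ y, g y ∂μ))) :
    ∀ g : C(K, ℝ),
      TendstoUniformly (fun (n : ℕ) (x : K) => (n : ℝ)⁻¹ * ∑ k ∈ Finset.range n, ((U ^ k) g) x)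
        (fun _ => ∫ y, g y ∂μ) atTop := by
  intro g
  set c : ℝ := ∫ y, g y ∂μ with hc
  rw [Metric.tendstoUniformly_iff]
  intro ε hε
  set h : C(K, ℝ) := g - c • (1 : C(K, ℝ)) with hh
  have hUkh : ∀ (k : ℕ) (x : K), ((U ^ k) h) x = ((U ^ k) g) x - c := by
    intro k x
    rw [hh, map_sub, _root_.map_smul, ky_pow_one U hone]
    simp [smul_eq_mul]
  obtain ⟨M, hM1, hcov⟩ : ∃ M : ℕ, 1 ≤ M ∧ ∀ y : K, ∃ m : ℕ, 1 ≤ m ∧ m ≤ M ∧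
      |(m : ℝ)⁻¹ * ∑ k ∈ Finset.range m, ((U ^ k) g) y - c| < ε / 4 := by
    set V : ℕ → Set K := fun N =>
      {y | |((N + 1 : ℕ) : ℝ)⁻¹ * ∑ k ∈ Finset.range (N + 1), ((U ^ k) g) y - c| < ε / 4}
      with hV
    have hVopen : ∀ N, IsOpen (V N) := by
      intro N
      have hcont : Continuous fun y : K =>
          |((N + 1 : ℕ) : ℝ)⁻¹ * ∑ k ∈ Finset.range (N + 1), ((U ^ k) g) y - c| := by
        apply Continuous.abs
        apply Continuous.sub _ continuous_const
        exact Continuous.mul continuous_const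
          (continuous_finset_sum _ fun k _ => (map_continuous ((U ^ k) g)))
      exact isOpen_lt hcont continuous_const
    have hVcover : Set.univ ⊆ ⋃ N, V N := by
      intro y _
      obtain ⟨N0, hN0⟩ := Metric.tendsto_atTop.mp (hptw g y) (ε / 4) (by linarith)
      refine Set.mem_iUnion.mpr ⟨max N0 1 - 1, ?_⟩
      have hge : max N0 1 - 1 + 1 = max N0 1 := by omega
      simp only [V, Set.mem_setOf_eq, hge]
      have := hN0 (max N0 1) (le_max_left _ _)
      rwa [Real.dist_eq] at this
    obtain ⟨s, hs⟩ := IsCompact.elim_finite_subcover isCompact_univ V hVopen hVcover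
    refine ⟨s.sup id + 1, by omega, ?_⟩
    intro y
    obtain ⟨N, hNs, hyN⟩ := Set.mem_iUnion₂.mp (hs (Set.mem_univ y))
    refine ⟨N + 1, by omega, by
      have : N ≤ s.sup id := Finset.le_sup (f := id) hNs
      omega, ?_⟩
    simpa [V] using hyN
  set B : ℝ := ‖h‖ with hB
  have hB0 : 0 ≤ B := norm_nonneg _
  have habs : ∀ x, |h x| ≤ B := fun x => ContinuousMap.norm_coe_le_norm h x
  have hBle : ∀ x, h x ≤ B := fun x => (le_abs_self _).trans (habs x)
  have hBle' : ∀ x, (-h) x ≤ B := fun x => by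
    simp only [ContinuousMap.neg_apply]
    linarith [abs_le.mp (habs x)]
  have hsumh : ∀ (m : ℕ) (y : K), ∑ k ∈ Finset.range m, ((U ^ k) h) y
      = ∑ k ∈ Finset.range m, ((U ^ k) g) y - m * c := by
    intro m y
    rw [Finset.sum_congr rfl fun k _ => hUkh k y, Finset.sum_sub_distrib]
    simp [mul_comm]
  have hcovh : ∀ y, ∃ m, 1 ≤ m ∧ m ≤ M ∧
      ∑ k ∈ Finset.range m, ((U ^ k) h) y ≤ m * (ε / 4) := by
    intro y
    obtain ⟨m, hm1, hmM, hmlt⟩ := hcov y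
    refine ⟨m, hm1, hmM, ?_⟩
    have hm0 : (0 : ℝ) < m := by exact_mod_cast hm1
    have h3 := (abs_le.mp hmlt.le).2
    rw [hsumh]
    calc ∑ k ∈ Finset.range m, ((U ^ k) g) y - m * c
        = m * ((m : ℝ)⁻¹ * ∑ k ∈ Finset.range m, ((U ^ k) g) y - c) := by
          field_simp
      _ ≤ m * (ε / 4) := mul_le_mul_of_nonneg_left h3 hm0.le
  have hcovh' : ∀ y, ∃ m, 1 ≤ m ∧ m ≤ M ∧
      ∑ k ∈ Finset.range m, ((U ^ k) (-h)) y ≤ m * (ε / 4) := by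
    intro y
    obtain ⟨m, hm1, hmM, hmlt⟩ := hcov y
    refine ⟨m, hm1, hmM, ?_⟩
    have hm0 : (0 : ℝ) < m := by exact_mod_cast hm1
    have h3 := (abs_le.mp hmlt.le).1
    have hneg : ∑ k ∈ Finset.range m, ((U ^ k) (-h)) y
        = -(∑ k ∈ Finset.range m, ((U ^ k) g) y - m * c) := by
      rw [← hsumh]
      simp [map_neg]
    rw [hneg]
    calc -(∑ k ∈ Finset.range m, ((U ^ k) g) y - m * c)
        = m * (-((m : ℝ)⁻¹ * ∑ k ∈ Finset.range m, ((U ^ k) g) y - c)) := by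
          field_simp
      _ ≤ m * (ε / 4) := mul_le_mul_of_nonneg_left (by linarith) hm0.le
  have key1 := ky_key U hpos hone h (ε / 4) B hB0 hBle (by linarith) M hcovh
  have key2 := ky_key U hpos hone (-h) (ε / 4) B hB0 hBle' (by linarith) M hcovh'
  -- conclusion
  rw [eventually_atTop]
  refine ⟨⌈4 * M * B / ε⌉₊ + 1, ?_⟩
  intro n hn
  intro x
  have hn1 : 1 ≤ n := by omega
  have hn0 : (0 : ℝ) < n := by exact_mod_cast hn1
  have hMB : M * B < n * (ε / 4) := by
    have h1 : (4 * M * B / ε : ℝ) ≤ ⌈(4 * M * B / ε : ℝ)⌉₊ := Nat.le_ceil _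
    have h2 : ((⌈(4 * M * B / ε : ℝ)⌉₊ : ℝ) + 1) ≤ n := by
      have : (⌈(4 * M * B / ε : ℝ)⌉₊ + 1 : ℕ) ≤ n := hn
      exact_mod_cast this
    have h3 : 4 * M * B / ε < n := by linarith
    have h4 : 4 * (M : ℝ) * B < n * ε := by
      rw [div_lt_iff₀ hε] at h3
      linarith
    linarith
  have hupper := key1 n x
  have hlower := key2 n x
  have hlow2 : -((n : ℝ) * (ε / 4) + M * B) ≤ ∑ k ∈ Finset.range n, ((U ^ k) h) x := by
    have : ∑ k ∈ Finset.range n, ((U ^ k) (-h)) x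
        = -∑ k ∈ Finset.range n, ((U ^ k) h) x := by
      simp [map_neg]
    rw [this] at hlower
    linarith
  have habs2 : |∑ k ∈ Finset.range n, ((U ^ k) h) x| ≤ n * (ε / 4) + M * B :=
    abs_le.mpr ⟨hlow2, hupper⟩
  have hrewrite : (n : ℝ)⁻¹ * ∑ k ∈ Finset.range n, ((U ^ k) g) x - c
      = (n : ℝ)⁻¹ * ∑ k ∈ Finset.range n, ((U ^ k) h) x := by
    rw [hsumh]
    field_simp
  rw [Real.dist_eq, abs_sub_comm, hrewrite, abs_mul, abs_inv, abs_of_pos hn0]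
  calc (n : ℝ)⁻¹ * |∑ k ∈ Finset.range n, ((U ^ k) h) x|
      ≤ (n : ℝ)⁻¹ * (n * (ε / 4) + M * B) := by
        exact mul_le_mul_of_nonneg_left habs2 (by positivity)
    _ < (n : ℝ)⁻¹ * (n * (ε / 4) + n * (ε / 4)) := by
        apply mul_lt_mul_of_pos_left (by linarith) (by positivity)
    _ = ε / 2 := by field_simp; ring
    _ < ε := by linarith
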